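/- For any continuously differentiable function f : [1, ∞) → ℝ with f(x) → 0 as x → ∞ and with f' absolutely integrable, the difference between the sum ∑_{i=1}^∞ f(i) and the integral ∫_1^∞ f(x) dx is bounded in absolute value by (1/2)|f(1)| + (1/2)∫_1^∞ |f'(x)| dx. -/

import Mathlib

open MeasureTheory Filter Set

/-- Euler–Maclaurin (simplest form): for a continuously differentiable `f` on `[1, ∞)`
vanishing at infinity with absolutely integrable derivative, the sum `∑_{i=1}^∞ f(i)`
differs from `∫_1^∞ f` by at most `|f 1|/2 + (1/2)∫_1^∞ |f'|`. -/
theorem euler_maclaurin_simple (f f' : ℝ → ℝ)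
    (hderiv : ∀ x ∈ Ici (1 : ℝ), HasDerivAt f (f' x) x)
    (hcont : ContinuousOn f' (Ici 1))
    (hlim : Tendsto f atTop (nhds 0))
    (hsum : Summable (fun n : ℕ => f (n + 1)))
    (hint : IntegrableOn f (Ioi 1))
    (hint' : IntegrableOn f' (Ioi 1)) :
    |(∑' n : ℕ, f (n + 1)) - ∫ x in Ioi (1 : ℝ), f x| ≤
      (1 / 2) * |f 1| + (1 / 2) * ∫ x in Ioi (1 : ℝ), |f' x| := by
  set s : ℕ → Set ℝ := fun n => Ioc ((n:ℝ)+1) ((n:ℝ)+2) with hs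
  have hunion : ⋃ n : ℕ, s n = Ioi 1 := by
    ext x
    simp only [hs, mem_iUnion, mem_Ioc, mem_Ioi]
    constructor
    · rintro ⟨n, h1, _⟩
      have : (0:ℝ) ≤ (n:ℝ) := Nat.cast_nonneg n
      linarith
    · intro hx
      have h2 : (2:ℤ) ≤ ⌈x⌉ := by
        have h := Int.lt_ceil.mpr (show ((1:ℤ):ℝ) < x by exact_mod_cast hx)
        omega
      have hcast : ((⌈x⌉ - 2).toNat : ℝ) = (⌈x⌉:ℝ) - 2 := by
        have : ((⌈x⌉ - 2).toNat : ℤ) = ⌈x⌉ - 2 := Int.toNat_of_nonneg (by omega)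
        exact_mod_cast congrArg (Int.cast : ℤ → ℝ) this
      refine ⟨(⌈x⌉ - 2).toNat, ?_, ?_⟩
      · rw [hcast]; have := Int.ceil_lt_add_one (R := ℝ) x; linarith
      · rw [hcast]; have := Int.le_ceil x; linarith
  have hmeas : ∀ n, MeasurableSet (s n) := fun n => measurableSet_Ioc
  have hdisj : Pairwise (Function.onFun Disjoint s) := by
    intro m n hmn
    rcases hmn.lt_or_gt with h | h
    · have hmn' : (m:ℝ) + 1 ≤ (n:ℝ) := by exact_mod_cast Nat.succ_le_of_lt h
      exact Set.Ioc_disjoint_Ioc.mpr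
        ((min_le_left _ _).trans (le_trans (by linarith) (le_max_right _ _)))
    · have hmn' : (n:ℝ) + 1 ≤ (m:ℝ) := by exact_mod_cast Nat.succ_le_of_lt h
      exact Set.Ioc_disjoint_Ioc.mpr
        ((min_le_right _ _).trans (le_trans (by linarith) (le_max_left _ _)))
  have hI : HasSum (fun n => ∫ x in s n, f x) (∫ x in Ioi (1:ℝ), f x) := by
    rw [← hunion] at hint ⊢
    exact hasSum_integral_iUnion hmeas hdisj hint
  have hJ : HasSum (fun n => ∫ x in s n, |f' x|) (∫ x in Ioi (1:ℝ), |f' x|) := by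
    have h : IntegrableOn (fun x => |f' x|) (Ioi (1:ℝ)) := hint'.abs
    rw [← hunion] at h ⊢
    exact hasSum_integral_iUnion hmeas hdisj h
  set g : ℕ → ℝ := fun n => ∫ x in ((n:ℝ)+1)..((n:ℝ)+2), (x - ((n:ℝ)+1) - 1/2) * f' x with hg
  have hab : ∀ n : ℕ, ((n:ℝ)+1) ≤ ((n:ℝ)+2) := fun n => by linarith
  have hsub : ∀ n : ℕ, Ioc ((n:ℝ)+1) ((n:ℝ)+2) ⊆ Ioi 1 := by
    intro n x hx
    have : (0:ℝ) ≤ (n:ℝ) := Nat.cast_nonneg n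
    simp only [mem_Ioc] at hx; simp only [mem_Ioi]; linarith
  have hf'int : ∀ n : ℕ, IntervalIntegrable f' volume ((n:ℝ)+1) ((n:ℝ)+2) := by
    intro n
    rw [intervalIntegrable_iff_integrableOn_Ioc_of_le (hab n)]
    exact hint'.mono_set (hsub n)
  have hIBP : ∀ n : ℕ, g n = (1/2) * f ((n:ℝ)+2) + (1/2) * f ((n:ℝ)+1)
      - ∫ x in s n, f x := by
    intro n
    have huicc : uIcc ((n:ℝ)+1) ((n:ℝ)+2) = Icc ((n:ℝ)+1) ((n:ℝ)+2) := uIcc_of_le (hab n)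
    have key := intervalIntegral.integral_mul_deriv_eq_deriv_mul
      (u := fun x => x - ((n:ℝ)+1) - 1/2) (v := f) (u' := fun _ => (1:ℝ)) (v' := f')
      (a := (n:ℝ)+1) (b := (n:ℝ)+2)
      (fun x _ => by
        simpa using ((hasDerivAt_id x).sub_const ((n:ℝ)+1)).sub_const (1/2))
      (fun x hx => by
        apply hderiv
        rw [huicc] at hx
        have : (0:ℝ) ≤ (n:ℝ) := Nat.cast_nonneg n
        exact mem_Ici.mpr (by linarith [hx.1]))
      intervalIntegrable_const (hf'int n)
    have h1 : ∫ x in ((n:ℝ)+1)..((n:ℝ)+2), (1:ℝ) * f x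
        = ∫ x in s n, f x := by
      simp only [one_mul]
      exact intervalIntegral.integral_of_le (hab n)
    rw [hg]
    simp only []
    rw [key, h1]
    ring
  have hgbound : ∀ n : ℕ, |g n| ≤ (1/2) * ∫ x in s n, |f' x| := by
    intro n
    have h1 : |g n| ≤ ∫ x in ((n:ℝ)+1)..((n:ℝ)+2), |(x - ((n:ℝ)+1) - 1/2) * f' x| :=
      intervalIntegral.abs_integral_le_integral_abs (hab n)
    have hmul : IntervalIntegrable (fun x => (x - ((n:ℝ)+1) - 1/2) * f' x) volume
        ((n:ℝ)+1) ((n:ℝ)+2) :=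
      (hf'int n).continuousOn_mul (by fun_prop)
    have h2 : ∫ x in ((n:ℝ)+1)..((n:ℝ)+2), |(x - ((n:ℝ)+1) - 1/2) * f' x|
        ≤ ∫ x in ((n:ℝ)+1)..((n:ℝ)+2), (1/2) * |f' x| := by
      apply intervalIntegral.integral_mono_on (hab n) hmul.abs
        ((hf'int n).abs.const_mul _)
      intro x hx
      rw [abs_mul]
      apply mul_le_mul_of_nonneg_right _ (abs_nonneg _)
      rw [abs_le]
      constructor
      · linarith [hx.1]
      · linarith [hx.2]
    have h3 : ∫ x in ((n:ℝ)+1)..((n:ℝ)+2), (1/2) * |f' x|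
        = (1/2) * ∫ x in s n, |f' x| := by
      rw [intervalIntegral.integral_const_mul, intervalIntegral.integral_of_le (hab n)]
    linarith
  have hgabs : Summable (fun n => |g n|) :=
    Summable.of_nonneg_of_le (fun n => abs_nonneg _) hgbound (hJ.summable.mul_left (1/2))
  have hgsum : Summable g := by
    have := hgabs
    rw [← summable_norm_iff]
    simpa [Real.norm_eq_abs] using this
  have hIsum : Summable (fun n => ∫ x in s n, f x) := hI.summable
  -- d n = f(n+1) - ∫_{s n} f, t n = d n - g n
  set d : ℕ → ℝ := fun n => f ((n:ℝ)+1) - ∫ x in s n, f x with hdd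
  have hdsum : Summable d := hsum.sub hIsum
  set t : ℕ → ℝ := fun n => d n - g n with ht
  have htsum : Summable t := hdsum.sub hgsum
  have htval : ∀ n : ℕ, t n = (1/2) * f ((n:ℝ)+1) - (1/2) * f (((n+1:ℕ):ℝ)+1) := by
    intro n
    rw [ht]
    simp only [hdd]
    rw [hIBP n]
    push_cast
    ring_nf
  -- partial sums of t telescope
  have hpartial : ∀ N : ℕ, ∑ i ∈ Finset.range N, t i
      = (1/2) * f 1 - (1/2) * f ((N:ℝ)+1) := by
    intro N
    rw [Finset.sum_congr rfl (fun i _ => htval i),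
        Finset.sum_range_sub' (fun n : ℕ => (1/2) * f ((n:ℝ)+1)) N]
    norm_num
  have hftend : Tendsto (fun N : ℕ => f ((N:ℝ)+1)) atTop (nhds 0) := by
    apply hlim.comp
    apply tendsto_atTop_add_const_right
    exact tendsto_natCast_atTop_atTop
  have hplim : Tendsto (fun N : ℕ => ∑ i ∈ Finset.range N, t i) atTop
      (nhds ((1/2) * f 1)) := by
    simp only [hpartial]
    have : Tendsto (fun N : ℕ => (1/2) * f 1 - (1/2) * f ((N:ℝ)+1)) atTop
        (nhds ((1/2) * f 1 - (1/2) * 0)) :=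
      tendsto_const_nhds.sub ((hftend.const_mul (1/2)).congr (fun _ => rfl))
    simpa using this
  have htHasSum : HasSum t ((1/2) * f 1) := by
    have h1 := htsum.hasSum.tendsto_sum_nat
    have heq : ∑' n, t n = (1/2) * f 1 := tendsto_nhds_unique h1 hplim
    exact heq ▸ htsum.hasSum
  -- combine: HasSum d (1/2 f 1 + tsum g) and HasSum d (tsum - integral)
  have hdHasSum1 : HasSum d ((1/2) * f 1 + ∑' n, g n) := by
    have h := htHasSum.add hgsum.hasSum
    have hfun : (fun n => t n + g n) = d := by
      funext n; rw [ht]; ring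
    rwa [hfun] at h
  have hdHasSum2 : HasSum d ((∑' n : ℕ, f (n + 1)) - ∫ x in Ioi (1:ℝ), f x) :=
    hsum.hasSum.sub hI
  have hkey : (∑' n : ℕ, f (n + 1)) - (∫ x in Ioi (1:ℝ), f x)
      = (1/2) * f 1 + ∑' n, g n := hdHasSum2.unique hdHasSum1
  rw [hkey]
  have h1 : |(1/2) * f 1 + ∑' n, g n| ≤ (1/2) * |f 1| + |∑' n, g n| := by
    calc |(1/2) * f 1 + ∑' n, g n| ≤ |(1/2) * f 1| + |∑' n, g n| := abs_add_le _ _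
    _ = (1/2) * |f 1| + |∑' n, g n| := by rw [abs_mul]; norm_num
  have hgabs' : Summable (fun n => ‖g n‖) := by
    simpa only [Real.norm_eq_abs] using hgabs
  have h2 : |∑' n, g n| ≤ ∑' n, |g n| := by
    have := norm_tsum_le_tsum_norm hgabs'
    simpa only [Real.norm_eq_abs] using this
  have h3 : ∑' n, |g n| ≤ (1/2) * ∫ x in Ioi (1:ℝ), |f' x| := by
    calc ∑' n, |g n| ≤ ∑' n, (1/2) * ∫ x in s n, |f' x| :=
      Summable.tsum_le_tsum hgbound hgabs (hJ.summable.mul_left (1/2))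
    _ = (1/2) * ∫ x in Ioi (1:ℝ), |f' x| := (hJ.mul_left (1/2)).tsum_eq
  linarith
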